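/- The map φ : (ℂP^{n−1})^k → I_{n,k} sending a k-tuple of lines (L₁, …, L_k) to the internal structure of the product T_{L_k}(z)⋯T_{L₁}(z) is surjective, and is injective on the set of tuples satisfying L_{j+1} ∩ L_j^⊥ = {0} for all j. -/

import Mathlib

set_option maxHeartbeats 1000000
set_option synthInstance.maxHeartbeats 400000


noncomputable def projc {n : ℕ} (V : Submodule ℂ (EuclideanSpace ℂ (Fin n))) :
    EuclideanSpace ℂ (Fin n) →L[ℂ] EuclideanSpace ℂ (Fin n) :=
  V.subtypeL.comp (V.orthogonalProjectionOnto)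

/-- The map `T_V(z) = z·Π_V + Π_V^⊥` of Definition 1.2. -/
noncomputable def Tc {n : ℕ} (V : Submodule ℂ (EuclideanSpace ℂ (Fin n))) (z : ℂ) :
    EuclideanSpace ℂ (Fin n) →L[ℂ] EuclideanSpace ℂ (Fin n) :=
  z • projc V + (1 - projc V)

/-- A vortex internal structure (Definition 1.1): an integer `k₀ ≥ 0` together with a
sequence `V 0, …, V (l-1)` of nonzero proper subspaces of `ℂ^n` such that consecutive
subspaces satisfy the non-intersection condition. -/
structure VortexStructure (n : ℕ) where
  k₀ : ℕ
  l : ℕ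
  V : Fin l → Submodule ℂ (EuclideanSpace ℂ (Fin n))
  ne_bot : ∀ j, V j ≠ ⊥
  ne_top : ∀ j, V j ≠ ⊤
  nonint : ∀ (j : ℕ) (h : j + 1 < l), V ⟨j + 1, h⟩ ⊓ (V ⟨j, Nat.lt_of_succ_lt h⟩)ᗮ = ⊥

/-- The order `n·k₀ + Σ_j dim V_j` of a vortex internal structure. -/
noncomputable def VortexStructure.order {n : ℕ} (s : VortexStructure n) : ℕ :=
  n * s.k₀ + ∑ j, Module.finrank ℂ (s.V j)

/-- The product `T_{V_l}(z) ∘ ⋯ ∘ T_{V_1}(z)`. -/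
noncomputable def VortexStructure.Tprod {n : ℕ} (s : VortexStructure n) (z : ℂ) :
    EuclideanSpace ℂ (Fin n) →L[ℂ] EuclideanSpace ℂ (Fin n) :=
  ((List.ofFn fun j => Tc (s.V j) z).reverse).prod

/-- `φ` factorizes near `0` as `φ(z) = A(z) · z^{k₀} · T_{V_l}(z) ⋯ T_{V_1}(z)` for a
matrix function `A` holomorphic and invertible near `0`. -/
def Factorizes {n : ℕ}
    (φ : ℂ → (EuclideanSpace ℂ (Fin n) →L[ℂ] EuclideanSpace ℂ (Fin n)))
    (s : VortexStructure n) : Prop :=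
  ∃ A : ℂ → (EuclideanSpace ℂ (Fin n) →L[ℂ] EuclideanSpace ℂ (Fin n)),
    AnalyticAt ℂ A 0 ∧
    ∀ᶠ z in nhds (0 : ℂ), IsUnit (A z) ∧ φ z = (A z).comp (z ^ s.k₀ • s.Tprod z)

variable {n : ℕ}

lemma projc_apply (V : Submodule ℂ (EuclideanSpace ℂ (Fin n))) (x) :
    projc V x = (V.orthogonalProjectionOnto x : EuclideanSpace ℂ (Fin n)) := rfl

lemma projc_mem (V : Submodule ℂ (EuclideanSpace ℂ (Fin n))) (x) : projc V x ∈ V :=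
  (V.orthogonalProjectionOnto x).2

lemma projc_eq_self {V : Submodule ℂ (EuclideanSpace ℂ (Fin n))} {x} (hx : x ∈ V) :
    projc V x = x := by
  rw [projc_apply]
  exact congrArg _ (Submodule.orthogonalProjectionOnto_mem_subspace_eq_self (⟨x, hx⟩ : V))

lemma sub_projc_mem (V : Submodule ℂ (EuclideanSpace ℂ (Fin n))) (x) :
    x - projc V x ∈ Vᗮ := V.sub_starProjection_mem_orthogonal x

lemma projc_eq_zero {V : Submodule ℂ (EuclideanSpace ℂ (Fin n))} {x} (hx : x ∈ Vᗮ) :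
    projc V x = 0 := by
  rw [projc_apply, Submodule.orthogonalProjectionOnto_apply_of_mem_orthogonal hx]
  rfl

lemma projc_mul_projc_self (V : Submodule ℂ (EuclideanSpace ℂ (Fin n))) :
    projc V * projc V = projc V := by
  ext x : 1
  exact projc_eq_self (projc_mem V x)

lemma projc_mul_projc_eq_zero {V W : Submodule ℂ (EuclideanSpace ℂ (Fin n))}
    (h : W ≤ Vᗮ) : projc V * projc W = 0 := by
  ext x
  simp [ContinuousLinearMap.mul_apply, projc_eq_zero (h (projc_mem W x))]

lemma le_orth_symm {V W : Submodule ℂ (EuclideanSpace ℂ (Fin n))} (h : W ≤ Vᗮ) : V ≤ Wᗮ :=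
  le_trans (Submodule.le_orthogonal_orthogonal V) (Submodule.orthogonal_le h)

lemma projc_sup {V W : Submodule ℂ (EuclideanSpace ℂ (Fin n))} (h : W ≤ Vᗮ) :
    projc (V ⊔ W) = projc V + projc W := by
  ext x : 1
  show (V ⊔ W).starProjection x = projc V x + projc W x
  refine Submodule.eq_starProjection_of_mem_orthogonal ?_ ?_
  · exact Submodule.add_mem_sup (projc_mem V x) (projc_mem W x)
  · rw [Submodule.mem_orthogonal]
    rintro u hu
    rcases Submodule.mem_sup.mp hu with ⟨a, ha, b, hb, rfl⟩
    have h1 : x - projc V x ∈ Vᗮ := sub_projc_mem V x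
    have h2 : x - projc W x ∈ Wᗮ := sub_projc_mem W x
    have hxV : x - (projc V x + projc W x) ∈ Vᗮ := by
      have := Vᗮ.sub_mem h1 (h (projc_mem W x))
      simpa [sub_sub] using this
    have hxW : x - (projc V x + projc W x) ∈ Wᗮ := by
      have := Wᗮ.sub_mem h2 (le_orth_symm h (projc_mem V x))
      have e : x - projc W x - projc V x = x - (projc V x + projc W x) := by abel
      rwa [e] at this
    rw [inner_add_left]
    rw [Submodule.inner_right_of_mem_orthogonal ha hxV,
      Submodule.inner_right_of_mem_orthogonal hb hxW, add_zero]

lemma Tc_mul_Tc {V W : Submodule ℂ (EuclideanSpace ℂ (Fin n))} (h : W ≤ Vᗮ) (z : ℂ) :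
    Tc V z * Tc W z = Tc (V ⊔ W) z := by
  have hPQ : projc V * projc W = 0 := projc_mul_projc_eq_zero h
  have hQP : projc W * projc V = 0 := projc_mul_projc_eq_zero (le_orth_symm h)
  simp only [Tc, projc_sup h]
  simp only [mul_add, add_mul, sub_mul, mul_sub, smul_mul_assoc, mul_smul_comm, hPQ, hQP,
    mul_one, one_mul, smul_zero, smul_add, smul_sub]
  module

lemma Tc_bot (z : ℂ) : Tc (⊥ : Submodule ℂ (EuclideanSpace ℂ (Fin n))) z = 1 := by
  have : projc (⊥ : Submodule ℂ (EuclideanSpace ℂ (Fin n))) = 0 := by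
    ext x : 1
    exact projc_eq_zero (by simp)
  simp only [Tc, this]
  module

lemma Tc_top (z : ℂ) : Tc (⊤ : Submodule ℂ (EuclideanSpace ℂ (Fin n))) z = z • 1 := by
  have : projc (⊤ : Submodule ℂ (EuclideanSpace ℂ (Fin n))) = 1 := by
    ext x : 1
    exact projc_eq_self (by simp)
  simp [Tc, this]

lemma Tc_zero_apply (V : Submodule ℂ (EuclideanSpace ℂ (Fin n))) (x) :
    Tc V 0 x = x - projc V x := by
  simp [Tc, sub_eq_add_neg]

lemma Tc_zero_eq_zero_iff (V : Submodule ℂ (EuclideanSpace ℂ (Fin n))) (x) :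
    Tc V 0 x = 0 ↔ x ∈ V := by
  rw [Tc_zero_apply, sub_eq_zero]
  constructor
  · intro h; rw [h]; exact projc_mem V x
  · intro h; rw [projc_eq_self h]

lemma Tc_zero_apply_mem_orth (V : Submodule ℂ (EuclideanSpace ℂ (Fin n))) (x) :
    Tc V 0 x ∈ Vᗮ := by
  rw [Tc_zero_apply]; exact sub_projc_mem V x

lemma Tc_mul_inv {z : ℂ} (hz : z ≠ 0) (V : Submodule ℂ (EuclideanSpace ℂ (Fin n))) :
    Tc V z * (z⁻¹ • projc V + (1 - projc V)) = 1 ∧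
    (z⁻¹ • projc V + (1 - projc V)) * Tc V z = 1 := by
  have hP : projc V * projc V = projc V := projc_mul_projc_self V
  constructor <;>
  · simp only [Tc, mul_add, add_mul, sub_mul, mul_sub, smul_mul_assoc, mul_smul_comm, hP,
      mul_one, one_mul, smul_smul, mul_inv_cancel₀ hz, inv_mul_cancel₀ hz, one_smul]
    match_scalars <;> field_simp <;> ring

lemma isUnit_Tc {z : ℂ} (hz : z ≠ 0) (V : Submodule ℂ (EuclideanSpace ℂ (Fin n))) :
    IsUnit (Tc V z) :=
  isUnit_iff_exists.mpr ⟨_, (Tc_mul_inv hz V).1, (Tc_mul_inv hz V).2⟩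

/-- Product `T_{V_m}(z) ⋯ T_{V_1}(z)` over a list of subspaces. -/
noncomputable def Pl (l : List (Submodule ℂ (EuclideanSpace ℂ (Fin n)))) (z : ℂ) :
    EuclideanSpace ℂ (Fin n) →L[ℂ] EuclideanSpace ℂ (Fin n) :=
  (l.map (fun V => Tc V z)).reverse.prod

lemma Pl_nil (z : ℂ) : Pl ([] : List (Submodule ℂ (EuclideanSpace ℂ (Fin n)))) z = 1 := rfl

lemma Pl_cons (V : Submodule ℂ (EuclideanSpace ℂ (Fin n))) (t) (z : ℂ) :
    Pl (V :: t) z = Pl t z * Tc V z := by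
  simp [Pl]

lemma Pl_append (a b : List (Submodule ℂ (EuclideanSpace ℂ (Fin n)))) (z : ℂ) :
    Pl (a ++ b) z = Pl b z * Pl a z := by
  simp [Pl]

lemma Pl_continuous (l : List (Submodule ℂ (EuclideanSpace ℂ (Fin n)))) :
    Continuous (fun z => Pl l z) := by
  induction l with
  | nil => simpa [Pl_nil] using continuous_const
  | cons V t ih =>
      simp only [Pl_cons]
      exact ih.mul ((continuous_id.smul continuous_const).add continuous_const)

lemma Pl_ofFn {m : ℕ} (f : Fin m → Submodule ℂ (EuclideanSpace ℂ (Fin n))) (z : ℂ) :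
    Pl (List.ofFn f) z = ((List.ofFn fun i => Tc (f i) z).reverse).prod := by
  simp [Pl, List.map_ofFn]
  rfl

lemma ker_Pl_zero (V : Submodule ℂ (EuclideanSpace ℂ (Fin n)))
    (t : List (Submodule ℂ (EuclideanSpace ℂ (Fin n))))
    (hc : List.Chain (fun (a b : Submodule ℂ (EuclideanSpace ℂ (Fin n))) => b ⊓ aᗮ = ⊥) V t) (x : EuclideanSpace ℂ (Fin n)) :
    Pl (V :: t) 0 x = 0 ↔ x ∈ V := by
  induction t generalizing V x with
  | nil => rw [Pl_cons, Pl_nil, one_mul, Tc_zero_eq_zero_iff]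
  | cons W t ih =>
      rcases List.chain_cons.mp hc with ⟨h1, hc'⟩
      have key : Pl (V :: W :: t) 0 x = Pl (W :: t) 0 (Tc V 0 x) := by
        rw [Pl_cons]; rfl
      rw [key, ih W hc']
      constructor
      · intro h
        have : Tc V 0 x ∈ W ⊓ Vᗮ := ⟨h, Tc_zero_apply_mem_orth V x⟩
        rw [h1] at this
        exact (Tc_zero_eq_zero_iff V x).mp this
      · intro h
        rw [(Tc_zero_eq_zero_iff V x).mpr h]
        exact W.zero_mem

lemma range_fin_succ {d : ℕ} {α : Type*} (v : Fin (d + 1) → α) :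
    Set.range v = {v 0} ∪ Set.range (fun i => v (Fin.succ i)) := by
  ext y
  constructor
  · rintro ⟨i, rfl⟩
    refine Fin.cases (Or.inl rfl) (fun j => Or.inr ⟨j, rfl⟩) i
  · rintro (rfl | ⟨j, rfl⟩)
    exacts [⟨0, rfl⟩, ⟨j.succ, rfl⟩]

lemma Pl_orthonormal_family : ∀ {d : ℕ} (v : Fin d → EuclideanSpace ℂ (Fin n)),
    Orthonormal ℂ v → ∀ z,
    Pl (List.ofFn fun i => ℂ ∙ v i) z = Tc (Submodule.span ℂ (Set.range v)) z := by
  intro d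
  induction d with
  | zero =>
      intro v _ z
      simp [Pl_nil, Tc_bot]
  | succ d ih =>
      intro v hv z
      have hv' : Orthonormal ℂ (fun i => v (Fin.succ i)) := hv.comp _ (Fin.succ_injective d)
      have horth : (ℂ ∙ v 0) ≤ (Submodule.span ℂ (Set.range (fun i => v (Fin.succ i))))ᗮ := by
        rw [Submodule.span_singleton_le_iff_mem, Submodule.mem_orthogonal]
        intro u hu
        induction hu using Submodule.span_induction with
        | mem u hu =>
            rcases hu with ⟨j, rfl⟩
            exact hv.2 (Fin.succ_ne_zero j)
        | zero => simp
        | add a b _ _ ha hb => rw [inner_add_left, ha, hb, add_zero]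
        | smul c a _ ha => rw [inner_smul_left, ha, mul_zero]
      have hspan : Submodule.span ℂ (Set.range v) =
          Submodule.span ℂ (Set.range (fun i => v (Fin.succ i))) ⊔ (ℂ ∙ v 0) := by
        rw [range_fin_succ, Set.union_comm, Submodule.span_union]
      have heq := ih (fun i => v (Fin.succ i)) hv' z
      rw [List.ofFn_succ, Pl_cons, heq, Tc_mul_Tc horth, hspan]

/-- A list of lines spanning `V`, obtained from an orthonormal basis of `V`. -/
noncomputable def lineList (V : Submodule ℂ (EuclideanSpace ℂ (Fin n))) :
    List (Submodule ℂ (EuclideanSpace ℂ (Fin n))) :=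
  List.ofFn (fun i : Fin (Module.finrank ℂ V) => ℂ ∙ ((stdOrthonormalBasis ℂ V i : EuclideanSpace ℂ (Fin n))))

lemma lineList_length (V : Submodule ℂ (EuclideanSpace ℂ (Fin n))) :
    (lineList V).length = Module.finrank ℂ V := by
  simp [lineList]

lemma orthonormal_coe_std (V : Submodule ℂ (EuclideanSpace ℂ (Fin n))) :
    Orthonormal ℂ (fun i => ((stdOrthonormalBasis ℂ V i : EuclideanSpace ℂ (Fin n)))) := by
  rw [orthonormal_iff_ite]
  intro i j
  rw [← Submodule.coe_inner]
  exact orthonormal_iff_ite.mp (stdOrthonormalBasis ℂ V).orthonormal i j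

lemma lineList_finrank (V : Submodule ℂ (EuclideanSpace ℂ (Fin n))) :
    ∀ W ∈ lineList V, Module.finrank ℂ W = 1 := by
  intro W hW
  rw [lineList, List.mem_ofFn] at hW
  rcases hW with ⟨i, rfl⟩
  refine finrank_span_singleton ?_
  have h1 := (orthonormal_coe_std V).1 i
  intro h0
  simp only [h0] at h1
  simp at h1

lemma span_coe_std (V : Submodule ℂ (EuclideanSpace ℂ (Fin n))) :
    Submodule.span ℂ (Set.range (fun i => ((stdOrthonormalBasis ℂ V i : EuclideanSpace ℂ (Fin n))))) = V := by
  have h1 : Set.range (fun i => ((stdOrthonormalBasis ℂ V i : EuclideanSpace ℂ (Fin n)))) =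
      V.subtype '' Set.range (stdOrthonormalBasis ℂ V) := by
    rw [← Set.range_comp]; rfl
  rw [h1, ← Submodule.map_span, ← (stdOrthonormalBasis ℂ V).coe_toBasis,
    Module.Basis.span_eq, Submodule.map_top, Submodule.range_subtype]

lemma Pl_lineList (V : Submodule ℂ (EuclideanSpace ℂ (Fin n))) (z : ℂ) :
    Pl (lineList V) z = Tc V z := by
  rw [lineList, Pl_orthonormal_family _ (orthonormal_coe_std V) z, span_coe_std]

lemma unit_apply_eq_zero_iff {B : EuclideanSpace ℂ (Fin n) →L[ℂ] EuclideanSpace ℂ (Fin n)}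
    (hB : IsUnit B) (x : EuclideanSpace ℂ (Fin n)) : B x = 0 ↔ x = 0 := by
  constructor
  · intro h
    have : (Ring.inverse B * B) x = Ring.inverse B (B x) := rfl
    rw [Ring.inverse_mul_cancel _ hB, h] at this
    simpa using this
  · rintro rfl; simp

lemma Pl_unique : ∀ (lV lV' : List (Submodule ℂ (EuclideanSpace ℂ (Fin n))))
    (_ : lV.length = lV'.length)
    (_ : List.Chain' (fun (a b : Submodule ℂ (EuclideanSpace ℂ (Fin n))) => b ⊓ aᗮ = ⊥) lV)
    (_ : List.Chain' (fun (a b : Submodule ℂ (EuclideanSpace ℂ (Fin n))) => b ⊓ aᗮ = ⊥) lV')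
    (B : ℂ → (EuclideanSpace ℂ (Fin n) →L[ℂ] EuclideanSpace ℂ (Fin n)))
    (_ : ContinuousAt B 0)
    (_ : ∀ᶠ z in nhds (0 : ℂ), IsUnit (B z) ∧ Pl lV z = B z * Pl lV' z),
    lV = lV' := by
  intro lV
  induction lV with
  | nil =>
      intro lV' hlen _ _ _ _ _
      exact (List.length_eq_zero_iff.mp hlen.symm).symm
  | cons V t ih =>
      intro lV' hlen hc hc' B hB h
      cases lV' with
      | nil => simp at hlen
      | cons V' t' =>
          have h0 := h.self_of_nhds
          have hcV : List.Chain (fun (a b : Submodule ℂ (EuclideanSpace ℂ (Fin n))) => b ⊓ aᗮ = ⊥) V t := hc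
          have hcV' : List.Chain (fun (a b : Submodule ℂ (EuclideanSpace ℂ (Fin n))) => b ⊓ aᗮ = ⊥) V' t' := hc'
          -- first entries agree
          have hVV' : V = V' := by
            ext x
            rw [← ker_Pl_zero V t hcV x, ← ker_Pl_zero V' t' hcV' x, h0.2]
            exact (unit_apply_eq_zero_iff h0.1 _)
          subst hVV'
          -- equality of the tail products at 0, by continuity
          have hpunct : ∀ᶠ z in nhdsWithin (0 : ℂ) {(0 : ℂ)}ᶜ,
              Pl t z = B z * Pl t' z := by
            filter_upwards [h.filter_mono nhdsWithin_le_nhds, self_mem_nhdsWithin]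
              with z hz hz0
            have hu := isUnit_Tc (hz0 : z ≠ 0) V
            refine hu.mul_right_cancel ?_
            rw [← Pl_cons, hz.2, Pl_cons, mul_assoc]
          have h0' : Pl t 0 = B 0 * Pl t' 0 :=
            tendsto_nhds_unique_of_eventuallyEq
              (((Pl_continuous t).continuousAt (x := (0:ℂ))).continuousWithinAt)
              ((hB.mul ((Pl_continuous t').continuousAt)).continuousWithinAt) hpunct
          have h' : ∀ᶠ z in nhds (0 : ℂ), IsUnit (B z) ∧ Pl t z = B z * Pl t' z := by
            filter_upwards [h] with z hz
            refine ⟨hz.1, ?_⟩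
            by_cases hz0 : z = 0
            · subst hz0; exact h0'
            · have hu := isUnit_Tc hz0 V
              refine hu.mul_right_cancel ?_
              rw [← Pl_cons, hz.2, Pl_cons, mul_assoc]
          rw [ih t' (by simpa using hlen) hc.tail hc'.tail B hB h']

lemma Pl_flatten (LL : List (List (Submodule ℂ (EuclideanSpace ℂ (Fin n))))) (z : ℂ) :
    Pl LL.flatten z = (LL.map (fun l => Pl l z)).reverse.prod := by
  induction LL with
  | nil => simp [Pl_nil]
  | cons l LL ih =>
      rw [List.flatten_cons, Pl_append, ih, List.map_cons, List.reverse_cons,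
        List.prod_append, List.prod_singleton]

lemma ofFn_get_cast {α : Type*} (l : List α) {k : ℕ} (h : k = l.length) :
    List.ofFn (fun i : Fin k => l.get (Fin.cast h i)) = l := by
  subst h
  exact List.ofFn_get l

lemma chain'_ofFn_of_nonint {k : ℕ} (M : Fin k → Submodule ℂ (EuclideanSpace ℂ (Fin n)))
    (hni : ∀ (i : ℕ) (h : i + 1 < k), M ⟨i + 1, h⟩ ⊓ (M ⟨i, Nat.lt_of_succ_lt h⟩)ᗮ = ⊥) :
    List.Chain' (fun (a b : Submodule ℂ (EuclideanSpace ℂ (Fin n))) => b ⊓ aᗮ = ⊥) (List.ofFn M) := by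
  refine List.isChain_iff_getElem.mpr ?_
  intro i hlt
  rw [List.length_ofFn] at hlt
  simp only [List.getElem_ofFn]
  exact hni i (by omega)

/-- Proposition 4.1 (algebraic content): the map sending a `k`-tuple of lines
`(L 0, …, L (k-1))` in `ℂ^n` to the internal structure of `z ↦ T_{L (k-1)}(z) ⋯ T_{L 0}(z)`
is surjective onto the internal structures of order `k`, and injective on the tuples
satisfying the non-intersection condition. -/
theorem line_tuple_map_surjective_injective {n k : ℕ} (hn : 0 < n) :
    (∀ s : VortexStructure n, s.order = k →
      ∃ L : Fin k → Submodule ℂ (EuclideanSpace ℂ (Fin n)),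
        (∀ i, Module.finrank ℂ (L i) = 1) ∧
        Factorizes (fun z => ((List.ofFn fun i => Tc (L i) z).reverse).prod) s) ∧
    (∀ L L' : Fin k → Submodule ℂ (EuclideanSpace ℂ (Fin n)),
      (∀ i, Module.finrank ℂ (L i) = 1) → (∀ i, Module.finrank ℂ (L' i) = 1) →
      (∀ (i : ℕ) (h : i + 1 < k), L ⟨i + 1, h⟩ ⊓ (L ⟨i, Nat.lt_of_succ_lt h⟩)ᗮ = ⊥) →
      (∀ (i : ℕ) (h : i + 1 < k), L' ⟨i + 1, h⟩ ⊓ (L' ⟨i, Nat.lt_of_succ_lt h⟩)ᗮ = ⊥) →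
      ∀ s : VortexStructure n,
        Factorizes (fun z => ((List.ofFn fun i => Tc (L i) z).reverse).prod) s →
        Factorizes (fun z => ((List.ofFn fun i => Tc (L' i) z).reverse).prod) s →
        L = L') := by
  constructor
  · -- surjectivity
    intro s hs
    set ℓ : List (Submodule ℂ (EuclideanSpace ℂ (Fin n))) :=
      (List.ofFn fun j => lineList (s.V j)).flatten ++
        (List.replicate s.k₀ (lineList (⊤ : Submodule ℂ (EuclideanSpace ℂ (Fin n))))).flatten
      with hℓ
    have htoplen : (lineList (⊤ : Submodule ℂ (EuclideanSpace ℂ (Fin n)))).length = n := by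
      rw [lineList_length, finrank_top, finrank_euclideanSpace_fin]
    have hlen : k = ℓ.length := by
      rw [← hs, VortexStructure.order, hℓ]
      simp [List.length_flatten, List.map_ofFn, List.sum_ofFn, lineList_length, htoplen,
        List.map_replicate, List.sum_replicate, smul_eq_mul, Function.comp]
      ring
    have hall : ∀ W ∈ ℓ, Module.finrank ℂ W = 1 := by
      intro W hW
      rw [hℓ, List.mem_append] at hW
      rcases hW with hW | hW <;> rw [List.mem_flatten] at hW <;>
        rcases hW with ⟨l, hl, hWl⟩
      · rw [List.mem_ofFn] at hl
        rcases hl with ⟨j, rfl⟩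
        exact lineList_finrank _ _ hWl
      · rw [List.eq_of_mem_replicate hl] at hWl
        exact lineList_finrank _ _ hWl
    refine ⟨fun i => ℓ.get (Fin.cast hlen i), ?_, ?_⟩
    · intro i
      exact hall _ (ℓ.get_mem _)
    · refine ⟨fun _ => 1, analyticAt_const, Filter.Eventually.of_forall fun z =>
        ⟨isUnit_one, ?_⟩⟩
      have hP : Pl ℓ z = z ^ s.k₀ • s.Tprod z := by
        rw [hℓ, Pl_append, Pl_flatten, Pl_flatten, List.map_ofFn, List.map_replicate]
        simp only [Function.comp_def, Pl_lineList, Tc_top]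
        rw [List.reverse_replicate, List.prod_replicate, smul_pow, one_pow,
          smul_mul_assoc, one_mul]
        rfl
      show ((List.ofFn fun i => Tc (ℓ.get (Fin.cast hlen i)) z).reverse).prod = _
      have hgc : (List.ofFn fun i => ℓ.get (Fin.cast hlen i)) = ℓ := ofFn_get_cast ℓ hlen
      rw [← Pl_ofFn, hgc, hP]
      simp [ContinuousLinearMap.one_def]
  · -- injectivity
    intro L L' hr hr' hni hni' s hF hF'
    obtain ⟨A, hA, hAe⟩ := hF
    obtain ⟨A', hA', hA'e⟩ := hF'
    have hu0 : IsUnit (A' 0) := hA'e.self_of_nhds.1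
    have hBc : ContinuousAt (fun z => A z * Ring.inverse (A' z)) 0 := by
      have h2 : ContinuousAt (Ring.inverse ∘ A') 0 := by
        refine ContinuousAt.comp ?_ hA'.continuousAt
        have := NormedRing.inverse_continuousAt hu0.unit
        rwa [hu0.unit_spec] at this
      exact (hA.continuousAt).mul h2
    have hev : ∀ᶠ z in nhds (0 : ℂ), IsUnit (A z * Ring.inverse (A' z)) ∧
        Pl (List.ofFn L) z = (A z * Ring.inverse (A' z)) * Pl (List.ofFn L') z := by
      filter_upwards [hAe, hA'e] with z hz hz'
      obtain ⟨huz, hez⟩ := hz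
      obtain ⟨huz', hez'⟩ := hz'
      have hez2 : Pl (List.ofFn L) z = A z * (z ^ s.k₀ • s.Tprod z) := by
        rw [Pl_ofFn, ContinuousLinearMap.mul_def]
        exact hez
      have hez2' : Pl (List.ofFn L') z = A' z * (z ^ s.k₀ • s.Tprod z) := by
        rw [Pl_ofFn, ContinuousLinearMap.mul_def]
        exact hez'
      constructor
      · refine huz.mul ?_
        rw [← huz'.unit_spec, Ring.inverse_unit]
        exact (huz'.unit⁻¹).isUnit
      · rw [hez2, hez2', mul_assoc, Ring.inverse_mul_cancel_left _ _ huz']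
    have := Pl_unique (List.ofFn L) (List.ofFn L') (by simp)
      (chain'_ofFn_of_nonint L hni) (chain'_ofFn_of_nonint L' hni') _ hBc hev
    exact List.ofFn_injective this
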